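/- Let T′ be obtained from a rooted tree T by the star shift operation: v_1 is a vertex of T all of whose (at least two) children are leaves, u is one of these leaf children, and T′ is formed by introducing a new vertex v_2 as a child of v_1, keeping u as a child of v_1, and making all other children of v_1 children of v_2. Suppose there is a nonnegative eigenvector of C(T) for the eigenvalue ρ_C(T) whose entries corresponding to all children of v_1 are strictly positive. Then ρ_C(T′) > ρ_C(T). -/

import Mathlib

open Matrix

/-- A rooted tree on a finite vertex type `V`, encoded by its root and the
parent function: the root is its own parent, and iterating the parent function
from any vertex eventually reaches the root.  (These conditions force the graph
whose edges join each non-root vertex to its parent to be a tree.) -/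
structure TreeOn (V : Type) [Fintype V] [DecidableEq V] where
  root : V
  parent : V → V
  parent_root : parent root = root
  reaches : ∀ v, ∃ k, parent^[k] v = root

namespace TreeOn

variable {V : Type} [Fintype V] [DecidableEq V]

/-- `u` is a (weak) ancestor of `v`: some iterate of the parent function sends
`v` to `u`.  (Any ancestor is reached within `Fintype.card V` steps, so the
bound makes the predicate decidable without changing its meaning.) -/
def IsAncestor (T : TreeOn V) (u v : V) : Prop :=
  ∃ k, k ≤ Fintype.card V ∧ T.parent^[k] v = u

instance (T : TreeOn V) (u v : V) : Decidable (T.IsAncestor u v) := by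
  have h : T.IsAncestor u v ↔ ∃ k ∈ Finset.range (Fintype.card V + 1), T.parent^[k] v = u := by
    simp [IsAncestor, Nat.lt_succ_iff]
  rw [h]; infer_instance

/-- The level of a vertex: its distance to the root. -/
def level (T : TreeOn V) (v : V) : ℕ := Nat.find (T.reaches v)

/-- The ancestral level `ℓ(v ∨ w)`: the level of the lowest common ancestor
of `v` and `w`, i.e. the greatest level of a common ancestor. -/
def lcaLevel (T : TreeOn V) (v w : V) : ℕ :=
  (Finset.univ.filter fun u => T.IsAncestor u v ∧ T.IsAncestor u w).sup T.level

/-- A leaf is a vertex with no children. -/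
def IsLeaf (T : TreeOn V) (v : V) : Prop := ∀ u, T.parent u = v → u = v

instance (T : TreeOn V) : DecidablePred T.IsLeaf := fun v =>
  inferInstanceAs (Decidable (∀ u, T.parent u = v → u = v))

/-- The type of leaves of `T`. -/
abbrev Leaf (T : TreeOn V) := {v : V // T.IsLeaf v}

/-- The ancestral matrix `C(T)`, indexed by the leaves of `T`, whose
`(v, w)` entry is the ancestral level `ℓ(v ∨ w)`. -/
noncomputable def ancMatrix (T : TreeOn V) : Matrix T.Leaf T.Leaf ℝ :=
  Matrix.of fun v w => (T.lcaLevel v.1 w.1 : ℝ)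

/-- The ancestral spectral radius `ρ_C(T)`: the largest eigenvalue of `C(T)`. -/
noncomputable def rhoC (T : TreeOn V) : ℝ :=
  sSup {μ : ℝ | ∃ x : T.Leaf → ℝ, x ≠ 0 ∧ T.ancMatrix.mulVec x = μ • x}

/-- The underlying simple graph of the tree: each non-root vertex is joined
to its parent. -/
def graph (T : TreeOn V) : SimpleGraph V :=
  SimpleGraph.fromRel fun u v => T.parent u = v ∧ u ≠ v

/-- The number of children (outdegree) of a vertex. -/
def childCount (T : TreeOn V) (v : V) : ℕ :=
  (Finset.univ.filter fun u => T.parent u = v ∧ u ≠ v).card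

end TreeOn

namespace TreeOn

variable {V : Type} [Fintype V] [DecidableEq V]

lemma iterate_level (T : TreeOn V) (v : V) : T.parent^[T.level v] v = T.root :=
  Nat.find_spec (T.reaches v)

lemma level_le (T : TreeOn V) {v : V} {k : ℕ} (h : T.parent^[k] v = T.root) :
    T.level v ≤ k := Nat.find_min' _ h

lemma leaf_eq_of_iterate (T : TreeOn V) {w : V} (hw : T.IsLeaf w) :
    ∀ k x, T.parent^[k] x = w → x = w := by
  intro k
  induction k with
  | zero => exact fun x h => h
  | succ k ih =>
    intro x h
    rw [Function.iterate_succ_apply'] at h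
    exact ih x (hw _ h)

lemma level_parent (T : TreeOn V) {v : V} (hv : v ≠ T.root) :
    T.level (T.parent v) + 1 = T.level v := by
  have h1 : T.level v ≠ 0 := by
    intro h0
    have h := T.iterate_level v
    rw [h0] at h; exact hv h
  obtain ⟨m, hm⟩ := Nat.exists_eq_succ_of_ne_zero h1
  have hspec : T.parent^[m] (T.parent v) = T.root := by
    have h := T.iterate_level v
    rwa [hm, Function.iterate_succ_apply] at h
  have h2 : T.level (T.parent v) ≤ m := T.level_le hspec
  have h3 : T.level v ≤ T.level (T.parent v) + 1 := by
    apply T.level_le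
    rw [Function.iterate_succ_apply]
    exact T.iterate_level (T.parent v)
  omega

lemma level_parent_le (T : TreeOn V) (v : V) : T.level (T.parent v) ≤ T.level v := by
  by_cases hv : v = T.root
  · subst hv; rw [T.parent_root]
  · have := T.level_parent hv; omega

lemma level_iterate_le (T : TreeOn V) (k : ℕ) (v : V) :
    T.level (T.parent^[k] v) ≤ T.level v := by
  induction k with
  | zero => exact le_refl _
  | succ k ih =>
    rw [Function.iterate_succ_apply']
    exact le_trans (T.level_parent_le _) ih

lemma isAncestor_self (T : TreeOn V) (v : V) : T.IsAncestor v v := ⟨0, Nat.zero_le _, rfl⟩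

lemma level_le_of_isAncestor (T : TreeOn V) {w v : V} (h : T.IsAncestor w v) :
    T.level w ≤ T.level v := by
  obtain ⟨k, -, hk⟩ := h
  rw [← hk]
  exact T.level_iterate_le k v

lemma lcaLevel_le_level (T : TreeOn V) (v w : V) : T.lcaLevel v w ≤ T.level v := by
  unfold lcaLevel
  apply Finset.sup_le
  intro x hx
  rw [Finset.mem_filter] at hx
  exact T.level_le_of_isAncestor hx.2.1

lemma level_le_lcaLevel (T : TreeOn V) {x v w : V} (h1 : T.IsAncestor x v)
    (h2 : T.IsAncestor x w) : T.level x ≤ T.lcaLevel v w := by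
  unfold lcaLevel
  exact Finset.le_sup (by simp [h1, h2])

lemma lcaLevel_comm (T : TreeOn V) (v w : V) : T.lcaLevel v w = T.lcaLevel w v := by
  unfold lcaLevel
  congr 1
  ext x
  simp only [Finset.mem_filter, Finset.mem_univ, true_and]
  exact and_comm

end TreeOn



section StarShiftAux

variable {V : Type} [Fintype V] [DecidableEq V]

/-- The condition for a vertex to be moved under `none` by the star shift. -/
def starCond (T : TreeOn V) (v1 u x : V) : Prop :=
  T.parent x = v1 ∧ x ≠ u ∧ x ≠ v1

variable {T : TreeOn V} {T' : TreeOn (Option V)} {v1 u : V}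

lemma ss_not_on_chain (hchild : ∀ x, T.parent x = v1 → x ≠ v1 → T.IsLeaf x)
    {x : V} (hx : ¬ starCond T v1 u x) (k : ℕ) :
    ¬ starCond T v1 u (T.parent^[k] x) := by
  intro hP
  have hleaf := hchild _ hP.1 hP.2.2
  have hxw : x = T.parent^[k] x := T.leaf_eq_of_iterate hleaf k x rfl
  rw [← hxw] at hP
  exact hx hP

lemma ss_lift_chain (hchild : ∀ x, T.parent x = v1 → x ≠ v1 → T.IsLeaf x)
    (hpar' : ∀ x : V, T'.parent (some x) =
      if T.parent x = v1 ∧ x ≠ u ∧ x ≠ v1 then none else some (T.parent x)) :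
    ∀ k (x : V), ¬ starCond T v1 u x →
      T'.parent^[k] (some x) = some (T.parent^[k] x) := by
  intro k
  induction k with
  | zero => intro x _; rfl
  | succ k ih =>
    intro x hx
    rw [Function.iterate_succ_apply, Function.iterate_succ_apply]
    rw [hpar' x, if_neg (show ¬(T.parent x = v1 ∧ x ≠ u ∧ x ≠ v1) from hx)]
    apply ih
    have h := ss_not_on_chain hchild hx 1
    simpa using h

lemma ss_proj_chain
    (hparnew : T'.parent none = some v1)
    (hpar' : ∀ x : V, T'.parent (some x) =
      if T.parent x = v1 ∧ x ≠ u ∧ x ≠ v1 then none else some (T.parent x)) :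
    ∀ k (o : Option V), ∃ j ≤ k,
      T.parent^[j] (o.getD v1) = (T'.parent^[k] o).getD v1 := by
  intro k
  induction k with
  | zero => exact fun o => ⟨0, le_refl 0, rfl⟩
  | succ k ih =>
    intro o
    obtain ⟨j, hj, hjeq⟩ := ih o
    rw [Function.iterate_succ_apply']
    cases ho : T'.parent^[k] o with
    | none =>
      rw [hparnew]
      refine ⟨j, le_trans hj (Nat.le_succ k), ?_⟩
      rw [ho] at hjeq
      simpa using hjeq
    | some y =>
      rw [ho] at hjeq
      simp only [Option.getD_some] at hjeq
      rw [hpar' y]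
      by_cases hy : T.parent y = v1 ∧ y ≠ u ∧ y ≠ v1
      · rw [if_pos hy]
        refine ⟨j + 1, Nat.succ_le_succ hj, ?_⟩
        rw [Function.iterate_succ_apply', hjeq]
        simpa using hy.1
      · rw [if_neg hy]
        refine ⟨j + 1, Nat.succ_le_succ hj, ?_⟩
        rw [Function.iterate_succ_apply', hjeq]
        rfl

lemma ss_level_le
    (hroot' : T'.root = some T.root)
    (hparnew : T'.parent none = some v1)
    (hpar' : ∀ x : V, T'.parent (some x) =
      if T.parent x = v1 ∧ x ≠ u ∧ x ≠ v1 then none else some (T.parent x))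
    (w : V) : T.level w ≤ T'.level (some w) := by
  obtain ⟨j, hj, hjeq⟩ := ss_proj_chain hparnew hpar' (T'.level (some w)) (some w)
  have hit := T'.iterate_level (some w)
  rw [hit, hroot'] at hjeq
  simp only [Option.getD_some] at hjeq
  exact le_trans (T.level_le hjeq) hj

lemma ss_level_succ_le
    (hroot' : T'.root = some T.root)
    (hparnew : T'.parent none = some v1)
    (hpar' : ∀ x : V, T'.parent (some x) =
      if T.parent x = v1 ∧ x ≠ u ∧ x ≠ v1 then none else some (T.parent x))
    {z : V} (hz : starCond T v1 u z) :
    T.level z + 1 ≤ T'.level (some z) := by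
  have hzroot : z ≠ T.root := by
    intro h
    apply hz.2.2
    rw [← hz.1, h, T.parent_root]
  have h0 : T'.parent (some z) = none := by rw [hpar' z, if_pos (show T.parent z = v1 ∧ z ≠ u ∧ z ≠ v1 from hz)]
  have hml : T'.parent^[T'.level (some z)] (some z) = some T.root := by
    rw [T'.iterate_level (some z), hroot']
  have hm0 : T'.level (some z) ≠ 0 := by
    intro h
    rw [h] at hml
    simp only [Function.iterate_zero, id_eq, Option.some.injEq] at hml
    exact hzroot hml
  have hm1 : T'.level (some z) ≠ 1 := by
    intro h
    rw [h] at hml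
    simp only [Function.iterate_one, h0] at hml
    exact absurd hml (by simp)
  obtain ⟨m, hm⟩ : ∃ m, T'.level (some z) = m + 2 := by
    refine ⟨T'.level (some z) - 2, ?_⟩
    omega
  have hchain : T'.parent^[m] (some v1) = some T.root := by
    have h : T'.parent^[m + 2] (some z) = T'.parent^[m] (some v1) := by
      rw [show m + 2 = m + 1 + 1 from rfl, Function.iterate_succ_apply,
        Function.iterate_succ_apply, h0, hparnew]
    rw [← h, ← hm]
    exact hml
  obtain ⟨j, hj, hjeq⟩ := ss_proj_chain hparnew hpar' m (some v1)
  rw [hchain] at hjeq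
  simp only [Option.getD_some] at hjeq
  have hlv1 : T.level v1 ≤ m := le_trans (T.level_le hjeq) hj
  have hlz : T.level (T.parent z) + 1 = T.level z := T.level_parent hzroot
  rw [hz.1] at hlz
  omega

lemma ss_ancestor_lift (hchild : ∀ x, T.parent x = v1 → x ≠ v1 → T.IsLeaf x)
    (hparnew : T'.parent none = some v1)
    (hpar' : ∀ x : V, T'.parent (some x) =
      if T.parent x = v1 ∧ x ≠ u ∧ x ≠ v1 then none else some (T.parent x))
    {w x : V} (hw : ¬ starCond T v1 u w) {k : ℕ} (hk : T.parent^[k] x = w) :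
    ∃ k' ≤ k + 1, T'.parent^[k'] (some x) = some w := by
  by_cases hx : starCond T v1 u x
  · cases k with
    | zero =>
      exfalso
      apply hw
      rw [← hk]
      exact hx
    | succ k =>
      have h1 : T.parent^[k] v1 = w := by
        rw [Function.iterate_succ_apply, hx.1] at hk
        exact hk
      have hv1 : ¬ starCond T v1 u v1 := fun h => h.2.2 rfl
      have h2 : T'.parent^[k] (some v1) = some w := by
        rw [ss_lift_chain hchild hpar' k v1 hv1, h1]
      refine ⟨k + 2, by omega, ?_⟩
      rw [show k + 2 = k + 1 + 1 from rfl, Function.iterate_succ_apply,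
        Function.iterate_succ_apply, hpar' x,
        if_pos (show T.parent x = v1 ∧ x ≠ u ∧ x ≠ v1 from hx), hparnew]
      exact h2
  · refine ⟨k, Nat.le_succ k, ?_⟩
    rw [ss_lift_chain hchild hpar' k x hx, hk]

end StarShiftAux


section StarShiftAux2

variable {V : Type} [Fintype V] [DecidableEq V]
variable {T : TreeOn V} {T' : TreeOn (Option V)} {v1 u : V}

lemma TreeOn.lcaLevel_le' {W : Type} [Fintype W] [DecidableEq W] {S : TreeOn W}
    {v w : W} {n : ℕ}
    (h : ∀ x, S.IsAncestor x v → S.IsAncestor x w → S.level x ≤ n) :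
    S.lcaLevel v w ≤ n := by
  unfold TreeOn.lcaLevel
  apply Finset.sup_le
  intro x hx
  rw [Finset.mem_filter] at hx
  exact h x hx.2.1 hx.2.2

lemma ss_lca_mono (hchild : ∀ x, T.parent x = v1 → x ≠ v1 → T.IsLeaf x)
    (hroot' : T'.root = some T.root)
    (hparnew : T'.parent none = some v1)
    (hpar' : ∀ x : V, T'.parent (some x) =
      if T.parent x = v1 ∧ x ≠ u ∧ x ≠ v1 then none else some (T.parent x))
    (x y : V) (hx : T.IsLeaf x) (hy : T.IsLeaf y) :
    T.lcaLevel x y ≤ T'.lcaLevel (some x) (some y) := by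
  apply TreeOn.lcaLevel_le'
  intro w hwx hwy
  by_cases hP : starCond T v1 u w
  · have hwleaf := hchild _ hP.1 hP.2.2
    obtain ⟨k, -, hk⟩ := hwx
    obtain ⟨k2, -, hk2⟩ := hwy
    have hxw : x = w := T.leaf_eq_of_iterate hwleaf k x hk
    have hyw : y = w := T.leaf_eq_of_iterate hwleaf k2 y hk2
    rw [hxw, hyw]
    calc T.level w ≤ T.level w + 1 := Nat.le_succ _
      _ ≤ T'.level (some w) := ss_level_succ_le hroot' hparnew hpar' hP
      _ ≤ T'.lcaLevel (some w) (some w) :=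
          T'.level_le_lcaLevel (T'.isAncestor_self _) (T'.isAncestor_self _)
  · obtain ⟨k, hkc, hk⟩ := hwx
    obtain ⟨k2, hkc2, hk2⟩ := hwy
    obtain ⟨k', hk'le, hk'⟩ := ss_ancestor_lift hchild hparnew hpar' hP hk
    obtain ⟨k2', hk2'le, hk2'⟩ := ss_ancestor_lift hchild hparnew hpar' hP hk2
    have hax : T'.IsAncestor (some w) (some x) :=
      ⟨k', by rw [Fintype.card_option]; omega, hk'⟩
    have hay : T'.IsAncestor (some w) (some y) :=
      ⟨k2', by rw [Fintype.card_option]; omega, hk2'⟩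
    exact le_trans (ss_level_le hroot' hparnew hpar' w) (T'.level_le_lcaLevel hax hay)

lemma ss_lca_diag
    (hroot' : T'.root = some T.root)
    (hparnew : T'.parent none = some v1)
    (hpar' : ∀ x : V, T'.parent (some x) =
      if T.parent x = v1 ∧ x ≠ u ∧ x ≠ v1 then none else some (T.parent x))
    {z : V} (hz : starCond T v1 u z) :
    T.lcaLevel z z + 1 ≤ T'.lcaLevel (some z) (some z) := by
  have h1 : T.lcaLevel z z ≤ T.level z := T.lcaLevel_le_level z z
  have h2 := ss_level_succ_le hroot' hparnew hpar' hz
  have h3 : T'.level (some z) ≤ T'.lcaLevel (some z) (some z) :=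
    T'.level_le_lcaLevel (T'.isAncestor_self _) (T'.isAncestor_self _)
  omega

end StarShiftAux2


lemma dot_self_pos {n : Type} [Fintype n] {x : n → ℝ} (hx : x ≠ 0) : 0 < x ⬝ᵥ x := by
  obtain ⟨i, hi⟩ := Function.ne_iff.mp hx
  have h : x ⬝ᵥ x = ∑ j, x j * x j := rfl
  rw [h]
  apply Finset.sum_pos' (fun j _ => mul_self_nonneg _)
  exact ⟨i, Finset.mem_univ i, mul_self_pos.mpr hi⟩

lemma rayleigh_le_sup {n : Type} [Fintype n] [DecidableEq n] [Nonempty n]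
    (A : Matrix n n ℝ) (hA : A.IsHermitian) (x : n → ℝ) :
    x ⬝ᵥ (A *ᵥ x) ≤ (Finset.univ.sup' Finset.univ_nonempty hA.eigenvalues) * (x ⬝ᵥ x) := by
  classical
  have hdot : ∀ p q : EuclideanSpace ℝ n, (inner ℝ p q : ℝ) = (p : n → ℝ) ⬝ᵥ q := by
    intro p q; simp [PiLp.inner_apply, dotProduct, RCLike.inner_apply, conj_trivial, mul_comm]
  have hT : Aᵀ = A := by
    ext i j; rw [transpose_apply, ← hA.apply j i, star_trivial]
  have hAsymm : ∀ v w : n → ℝ, v ⬝ᵥ (A *ᵥ w) = (A *ᵥ v) ⬝ᵥ w := by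
    intro v w
    rw [dotProduct_mulVec, ← mulVec_transpose, hT]
  set b := hA.eigenvectorBasis with hb
  set M := Finset.univ.sup' Finset.univ_nonempty hA.eigenvalues with hM
  obtain ⟨x', hx'⟩ : ∃ x' : EuclideanSpace ℝ n, (x' : n → ℝ) = x := ⟨WithLp.toLp 2 x, rfl⟩
  obtain ⟨y', hy'⟩ : ∃ y' : EuclideanSpace ℝ n, (y' : n → ℝ) = A *ᵥ x := ⟨WithLp.toLp 2 (A *ᵥ x), rfl⟩
  have hbi : ∀ i : n, (inner ℝ (b i) y' : ℝ) = hA.eigenvalues i * (inner ℝ (b i) x' : ℝ) := by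
    intro i
    have h := congrArg (· ⬝ᵥ x) (hA.mulVec_eigenvectorBasis i)
    simp only [smul_dotProduct, smul_eq_mul] at h
    calc (inner ℝ (b i) y' : ℝ) = (b i : n → ℝ) ⬝ᵥ (A *ᵥ x) := by rw [hdot, hy']
      _ = (A *ᵥ (b i : n → ℝ)) ⬝ᵥ x := hAsymm _ _
      _ = hA.eigenvalues i * ((b i : n → ℝ) ⬝ᵥ x) := h
      _ = hA.eigenvalues i * (inner ℝ (b i) x' : ℝ) := by rw [hdot, hx']
  have hparse := b.sum_inner_mul_inner x' y'
  have hparse2 := b.sum_inner_mul_inner x' x'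
  have e1 : (inner ℝ x' y' : ℝ) = x ⬝ᵥ (A *ᵥ x) := by rw [hdot, hx', hy']
  have e2 : (inner ℝ x' x' : ℝ) = x ⬝ᵥ x := by rw [hdot, hx']
  rw [e1] at hparse
  rw [e2] at hparse2
  calc x ⬝ᵥ (A *ᵥ x) = ∑ i, (inner ℝ x' (b i) : ℝ) * (inner ℝ (b i) y' : ℝ) := hparse.symm
    _ ≤ ∑ i, M * ((inner ℝ x' (b i) : ℝ) * (inner ℝ (b i) x' : ℝ)) := by
        apply Finset.sum_le_sum
        intro i _
        have h1 := hbi i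
        have h2 : (inner ℝ (b i) x' : ℝ) = inner ℝ x' (b i) := real_inner_comm _ _
        have h3 : hA.eigenvalues i ≤ M := Finset.le_sup' _ (Finset.mem_univ i)
        rw [h1, ← h2]
        nlinarith [mul_le_mul_of_nonneg_right h3 (mul_self_nonneg (inner ℝ (b i) x' : ℝ))]
    _ = M * (x ⬝ᵥ x) := by rw [← Finset.mul_sum, hparse2]

lemma lt_sSup_eigen {n : Type} [Fintype n] [DecidableEq n] (A : Matrix n n ℝ)
    (hA : A.IsHermitian) (g : n → ℝ) (hg : g ≠ 0) (ρ : ℝ)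
    (hlt : ρ * (g ⬝ᵥ g) < g ⬝ᵥ (A *ᵥ g)) :
    ρ < sSup {μ : ℝ | ∃ x : n → ℝ, x ≠ 0 ∧ A.mulVec x = μ • x} := by
  classical
  haveI : Nonempty n := ⟨(Function.ne_iff.mp hg).choose⟩
  set M := Finset.univ.sup' Finset.univ_nonempty hA.eigenvalues with hM
  have hmem : M ∈ {μ : ℝ | ∃ x : n → ℝ, x ≠ 0 ∧ A.mulVec x = μ • x} := by
    obtain ⟨i₀, -, hi₀⟩ := Finset.exists_mem_eq_sup' Finset.univ_nonempty hA.eigenvalues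
    refine ⟨(hA.eigenvectorBasis i₀ : n → ℝ), ?_, ?_⟩
    · intro h0
      exact hA.eigenvectorBasis.toBasis.ne_zero i₀ (by simpa using congrArg (WithLp.toLp 2) h0)
    · have h := hA.mulVec_eigenvectorBasis i₀
      rw [← hi₀] at h
      exact h
  have hbdd : ∀ μ' ∈ {μ : ℝ | ∃ x : n → ℝ, x ≠ 0 ∧ A.mulVec x = μ • x}, μ' ≤ M := by
    rintro μ' ⟨x, hx0, hx⟩
    have h1 : x ⬝ᵥ (A *ᵥ x) = μ' * (x ⬝ᵥ x) := by
      rw [hx, dotProduct_smul, smul_eq_mul]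
    have h2 := rayleigh_le_sup A hA x
    rw [h1] at h2
    exact le_of_mul_le_mul_right h2 (dot_self_pos hx0)
  have hρM : ρ < M := by
    have h2 := rayleigh_le_sup A hA g
    have := lt_of_lt_of_le hlt h2
    exact lt_of_mul_lt_mul_right this (le_of_lt (dot_self_pos hg))
  exact lt_of_lt_of_le hρM (le_csSup ⟨M, hbdd⟩ hmem)

/-- **star shift operation.** Let `v1` be a vertex of a rooted
tree `T` all of whose (at least two) children are leaves, and let `u` be one
of these leaf children.  The tree `T′` (on the vertex set `Option V`, with the
new vertex `none` playing the role of `v2`) is obtained by introducing the new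
vertex `v2` as a child of `v1`, keeping `u` as a child of `v1`, and making all
other children of `v1` children of `v2`.  If there is a nonnegative
eigenvector of `C(T)` for the eigenvalue `ρ_C(T)` whose entries at all
children of `v1` are positive, then `ρ_C(T′) > ρ_C(T)`. -/
theorem rhoC_lt_rhoC_starShift
    {V : Type} [Fintype V] [DecidableEq V] (T : TreeOn V)
    (T' : TreeOn (Option V)) (v1 u : V)
    (hchild : ∀ x, T.parent x = v1 → x ≠ v1 → T.IsLeaf x)
    (htwo : 2 ≤ T.childCount v1)
    (hu : T.parent u = v1) (hune : u ≠ v1)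
    (hroot' : T'.root = some T.root)
    (hparnew : T'.parent none = some v1)
    (hpar' : ∀ x : V, T'.parent (some x) =
      if T.parent x = v1 ∧ x ≠ u ∧ x ≠ v1 then none else some (T.parent x))
    (f : T.Leaf → ℝ) (hf0 : f ≠ 0) (hfnn : ∀ w, 0 ≤ f w)
    (hfeig : T.ancMatrix.mulVec f = T.rhoC • f)
    (hfpos : ∀ w : T.Leaf, T.parent w.1 = v1 → w.1 ≠ v1 → 0 < f w) :
    T.rhoC < T'.rhoC := by
  classical
  -- the moved child `z`
  obtain ⟨z, hzP⟩ : ∃ z, starCond T v1 u z := by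
    have h1 : (1:ℕ) < (Finset.univ.filter fun x => T.parent x = v1 ∧ x ≠ v1).card := by
      have := htwo
      unfold TreeOn.childCount at this
      omega
    obtain ⟨z, hzmem, hzu⟩ := Finset.exists_mem_ne h1 u
    rw [Finset.mem_filter] at hzmem
    exact ⟨z, hzmem.2.1, hzu, hzmem.2.2⟩
  have hzleaf : T.IsLeaf z := hchild z hzP.1 hzP.2.2
  -- leaves correspondence
  have hleaf_iff : ∀ x : V, T'.IsLeaf (some x) ↔ T.IsLeaf x := by
    intro x
    constructor
    · intro hl y hy
      by_cases hyP : T.parent y = v1 ∧ y ≠ u ∧ y ≠ v1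
      · exfalso
        have hxv1 : x = v1 := by rw [← hy, hyP.1]
        have hpu : T'.parent (some u) = some x := by
          rw [hpar' u, if_neg (by simp), hu, hxv1]
        have := hl (some u) hpu
        rw [Option.some_inj] at this
        exact hune (this.trans hxv1)
      · have hpy : T'.parent (some y) = some x := by
          rw [hpar' y, if_neg hyP, hy]
        have := hl (some y) hpy
        rwa [Option.some_inj] at this
    · intro hl o ho
      cases o with
      | none =>
        exfalso
        rw [hparnew, Option.some_inj] at ho
        have := hl u (by rw [hu, ho])
        rw [this] at hune
        exact hune ho.symm
      | some y =>
        rw [hpar' y] at ho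
        by_cases hyP : T.parent y = v1 ∧ y ≠ u ∧ y ≠ v1
        · rw [if_pos hyP] at ho
          exact absurd ho (by simp)
        · rw [if_neg hyP, Option.some_inj] at ho
          rw [Option.some_inj]
          exact hl y ho
  have hnone : ¬ T'.IsLeaf none := by
    intro hl
    have hpz : T'.parent (some z) = none := by
      rw [hpar' z, if_pos (show T.parent z = v1 ∧ z ≠ u ∧ z ≠ v1 from hzP)]
    exact absurd (hl (some z) hpz) (by simp)
  have hbij : Function.Bijective
      (fun a : T.Leaf => (⟨some a.1, (hleaf_iff a.1).2 a.2⟩ : T'.Leaf)) := by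
    constructor
    · intro a b hab
      apply Subtype.ext
      have := congrArg Subtype.val hab
      simpa using this
    · intro b
      have hb : ∃ x : V, b.1 = some x := by
        cases hb : b.1 with
        | none => exact absurd (hb ▸ b.2) hnone
        | some x => exact ⟨x, rfl⟩
      obtain ⟨x, hx⟩ := hb
      refine ⟨⟨x, (hleaf_iff x).1 (hx ▸ b.2)⟩, ?_⟩
      apply Subtype.ext
      exact hx.symm
  let e : T.Leaf ≃ T'.Leaf := Equiv.ofBijective _ hbij
  have he : ∀ a : T.Leaf, (e a).1 = some a.1 := fun a => rfl
  -- matrix entries comparison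
  have hentry : ∀ a b : T.Leaf, T.ancMatrix a b ≤ T'.ancMatrix (e a) (e b) := by
    intro a b
    show ((T.lcaLevel a.1 b.1 : ℕ) : ℝ) ≤ ((T'.lcaLevel (some a.1) (some b.1) : ℕ) : ℝ)
    exact_mod_cast ss_lca_mono hchild hroot' hparnew hpar' a.1 b.1 a.2 b.2
  set zl : T.Leaf := ⟨z, hzleaf⟩ with hzl
  have hdiagz : T.ancMatrix zl zl + 1 ≤ T'.ancMatrix (e zl) (e zl) := by
    show ((T.lcaLevel z z : ℕ) : ℝ) + 1 ≤ ((T'.lcaLevel (some z) (some z) : ℕ) : ℝ)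
    exact_mod_cast ss_lca_diag hroot' hparnew hpar' hzP
  -- Hermitian-ness of the new matrix
  have hherm : (T'.ancMatrix).IsHermitian := by
    apply Matrix.IsHermitian.ext
    intro i j
    rw [star_trivial]
    show ((T'.lcaLevel j.1 i.1 : ℕ) : ℝ) = ((T'.lcaLevel i.1 j.1 : ℕ) : ℝ)
    exact_mod_cast T'.lcaLevel_comm j.1 i.1
  -- the transported vector
  set g : T'.Leaf → ℝ := fun b => f (e.symm b) with hg
  have hge : ∀ a : T.Leaf, g (e a) = f a := by
    intro a; rw [hg]; simp
  have hg0 : g ≠ 0 := by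
    obtain ⟨a, ha⟩ := Function.ne_iff.mp hf0
    apply Function.ne_iff.mpr
    exact ⟨e a, by rw [hge]; exact ha⟩
  -- quadratic forms
  have hgg : g ⬝ᵥ g = f ⬝ᵥ f := by
    show ∑ b, g b * g b = ∑ a, f a * f a
    rw [← Equiv.sum_comp e (fun b => g b * g b)]
    apply Finset.sum_congr rfl
    intro a _
    rw [hge]
  have hquad' : g ⬝ᵥ (T'.ancMatrix *ᵥ g)
      = ∑ a, ∑ a', f a * (T'.ancMatrix (e a) (e a') * f a') := by
    show ∑ b, g b * ∑ b', T'.ancMatrix b b' * g b' = _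
    rw [← Equiv.sum_comp e (fun b => g b * ∑ b', T'.ancMatrix b b' * g b')]
    apply Finset.sum_congr rfl
    intro a _
    rw [hge, Finset.mul_sum]
    rw [← Equiv.sum_comp e (fun b' => f a * (T'.ancMatrix (e a) b' * g b'))]
    apply Finset.sum_congr rfl
    intro a' _
    rw [hge]
  have hquad : ∑ a, ∑ a', f a * (T.ancMatrix a a' * f a') = T.rhoC * (f ⬝ᵥ f) := by
    have h : ∑ a, ∑ a', f a * (T.ancMatrix a a' * f a') = f ⬝ᵥ (T.ancMatrix *ᵥ f) := by
      show _ = ∑ a, f a * ∑ a', T.ancMatrix a a' * f a'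
      apply Finset.sum_congr rfl
      intro a _
      rw [Finset.mul_sum]
    rw [h, hfeig, dotProduct_smul, smul_eq_mul]
  have hfz : 0 < f zl := hfpos zl hzP.1 hzP.2.2
  have hlt : ∑ a, ∑ a', f a * (T.ancMatrix a a' * f a')
      < ∑ a, ∑ a', f a * (T'.ancMatrix (e a) (e a') * f a') := by
    rw [← Finset.sum_product', ← Finset.sum_product']
    apply Finset.sum_lt_sum
    · rintro ⟨a, a'⟩ -
      have h1 : T.ancMatrix a a' * f a' ≤ T'.ancMatrix (e a) (e a') * f a' :=
        mul_le_mul_of_nonneg_right (hentry a a') (hfnn a')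
      exact mul_le_mul_of_nonneg_left h1 (hfnn a)
    · refine ⟨(zl, zl), Finset.mem_univ _, ?_⟩
      have h1 : (T.ancMatrix zl zl + 1) * f zl ≤ T'.ancMatrix (e zl) (e zl) * f zl :=
        mul_le_mul_of_nonneg_right hdiagz (le_of_lt hfz)
      nlinarith
  have hkey : T.rhoC * (g ⬝ᵥ g) < g ⬝ᵥ (T'.ancMatrix *ᵥ g) := by
    rw [hgg, hquad', ← hquad]
    exact hlt
  have hfinal := lt_sSup_eigen T'.ancMatrix hherm g hg0 T.rhoC hkey
  exact hfinal
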